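/- arXiv:math/0111064 — 5 statements merged into one kernel-verified Lean document; each statement's English description precedes it below -/
import Mathlib

section
/- Let α_1, …, α_d be a basis of a d-dimensional real inner product space such that ⟨α_i, α_j⟩ ≤ 0 for all i ≠ j, and let α_1^∨, …, α_d^∨ be the dual basis, characterized by ⟨α_i, α_j^∨⟩ = δ_{ij}. Then ⟨α_i^∨, α_j^∨⟩ ≥ 0 for all i ≠ j. -/
open scoped RealInnerProductSpace

/-- If `α₁, …, α_d` is a basis of a `d`-dimensional real inner product space with
`⟪α i, α j⟫ ≤ 0` for all `i ≠ j`, then the dual basis (characterized by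
`⟪α i, αd j⟫ = δᵢⱼ`) satisfies `⟪αd i, αd j⟫ ≥ 0` for all `i ≠ j`. -/
theorem dual_basis_pairwise_nonneg
    {E : Type*} [NormedAddCommGroup E] [InnerProductSpace ℝ E]
    {d : ℕ} (hdim : Module.finrank ℝ E = d)
    (α : Module.Basis (Fin d) ℝ E) (αd : Fin d → E)
    (hdual : ∀ i j, ⟪α i, αd j⟫ = if i = j then 1 else 0)
    (hobtuse : ∀ i j, i ≠ j → ⟪α i, α j⟫ ≤ 0) :
    ∀ i j, i ≠ j → 0 ≤ ⟪αd i, αd j⟫ := by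
  intro i j hij
  classical
  set c : Fin d → ℝ := fun k => α.repr (αd j) k with hc
  have key : ∀ k, ⟪αd k, αd j⟫ = c k := by
    intro k
    conv_lhs => rw [← α.sum_repr (αd j)]
    rw [inner_sum]
    simp only [real_inner_smul_right]
    rw [Finset.sum_eq_single k]
    · rw [real_inner_comm, hdual, if_pos rfl, mul_one]
    · intro b _ hbk
      rw [real_inner_comm, hdual, if_neg hbk, mul_zero]
    · intro h; exact absurd (Finset.mem_univ k) h
  rw [key i]
  -- show all coordinates are nonnegative
  have hcj : 0 ≤ c j := by rw [← key j]; exact real_inner_self_nonneg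
  by_contra hneg
  push_neg at hneg
  set S : Finset (Fin d) := Finset.univ.filter (fun k => c k < 0) with hS
  have hjS : j ∉ S := by simp [hS, not_lt.mpr hcj]
  set w : E := ∑ k ∈ S, (-c k) • α k with hw
  have hsum : αd j = (∑ k ∈ Sᶜ, c k • α k) - w := by
    conv_lhs => rw [← α.sum_repr (αd j)]
    rw [hw, ← Finset.sum_compl_add_sum S (fun k => c k • α k)]
    simp [sub_eq_add_neg, ← Finset.sum_neg_distrib]
  have hwz : ⟪αd j, w⟫ = 0 := by
    rw [hw, inner_sum]
    apply Finset.sum_eq_zero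
    intro k hk
    have hkj : j ≠ k := fun h => hjS (h ▸ hk)
    rw [real_inner_smul_right, real_inner_comm, hdual, if_neg (fun h => hkj h.symm),
      mul_zero]
  have hposw : ⟪(∑ k ∈ Sᶜ, c k • α k), w⟫ ≤ 0 := by
    rw [sum_inner]
    apply Finset.sum_nonpos
    intro k hk
    rw [hw, real_inner_smul_left, inner_sum]
    have hck : 0 ≤ c k :=
      le_of_not_gt (fun h => (Finset.mem_compl.mp hk) (by simp [hS, h]))
    apply mul_nonpos_of_nonneg_of_nonpos hck
    apply Finset.sum_nonpos
    intro l hl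
    have hcl : c l < 0 := by simpa [hS] using hl
    have hkl : k ≠ l := by
      intro h; subst h
      exact (Finset.mem_compl.mp hk) hl
    rw [real_inner_smul_right]
    have := hobtuse k l hkl
    nlinarith
  have hw' : w = (∑ k ∈ Sᶜ, c k • α k) - αd j := by rw [hsum]; abel
  have hww : ⟪w, w⟫ ≤ 0 := by
    calc ⟪w, w⟫ = ⟪(∑ k ∈ Sᶜ, c k • α k), w⟫ - ⟪αd j, w⟫ := by
          rw [← inner_sub_left, ← hw']
      _ ≤ 0 := by rw [hwz]; simpa using hposw
  have hw0 : w = 0 := by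
    have := real_inner_self_nonpos.mp hww
    exact this
  -- linear independence forces all coefficients in S to vanish
  have hli := α.linearIndependent
  rw [Fintype.linearIndependent_iff] at hli
  have hgz := hli (fun k => if k ∈ S then -c k else 0) (by
    rw [← hw0, hw]
    simp only [ite_smul, zero_smul]
    rw [Finset.sum_ite_mem, Finset.univ_inter])
  have hiS : i ∈ S := by simp [hS, hneg]
  have := hgz i
  simp only [hiS, if_true] at this
  linarith
end

section
/- Let α_1, …, α_d be a basis of a d-dimensional real inner product space such that ⟨α_i, α_j⟩ ≤ 0 for all i ≠ j, and let α_1^∨, …, α_d^∨ be the dual basis, characterized by ⟨α_i, α_j^∨⟩ = δ_{ij}. Define the obtuseness graph on vertex set {1, 2, …, d} with an edge {i, j} whenever ⟨α_i, α_j⟩ < 0. If this graph is connected, then ⟨α_i^∨, α_j^∨⟩ > 0 for all i ≠ j. -/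
open scoped RealInnerProductSpace

section Aux

variable {E : Type*} [NormedAddCommGroup E] [InnerProductSpace ℝ E]
  {d : ℕ} (α : Module.Basis (Fin d) ℝ E) (αd : Fin d → E)

/-- Pairing with the dual vectors computes coordinates in the basis `α`. -/
lemma aux_inner_dual_repr
    (hdual : ∀ i j, ⟪α i, αd j⟫ = if i = j then 1 else 0) (v : E) (k : Fin d) :
    ⟪αd k, v⟫ = α.repr v k := by
  conv_lhs => rw [← α.sum_repr v]
  rw [inner_sum]
  have h : ∀ l, ⟪αd k, α l⟫ = if l = k then 1 else 0 := by
    intro l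
    rw [real_inner_comm]
    exact hdual l k
  simp [real_inner_smul_right, h]

/-- All coordinates of `αd j` in the basis `α` are nonnegative. -/
lemma aux_repr_nonneg
    (hdual : ∀ i j, ⟪α i, αd j⟫ = if i = j then 1 else 0)
    (hobtuse : ∀ i j, i ≠ j → ⟪α i, α j⟫ ≤ 0) (j : Fin d) :
    ∀ k, 0 ≤ α.repr (αd j) k := by
  set c : Fin d → ℝ := fun k => α.repr (αd j) k with hc
  set n : Fin d → ℝ := fun k => max (-(c k)) 0 with hn
  set p : Fin d → ℝ := fun k => c k + n k with hp
  have hn0 : ∀ k, 0 ≤ n k := fun k => le_max_right _ _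
  have hp0 : ∀ k, 0 ≤ p k := by
    intro k
    simp only [hp, hn]
    rcases le_or_gt 0 (c k) with h | h
    · positivity
    · rw [max_eq_left (by linarith : (0:ℝ) ≤ -(c k))]
      linarith
  have hpn : ∀ k, p k * n k = 0 := by
    intro k
    simp only [hp, hn]
    rcases le_or_gt 0 (c k) with h | h
    · simp [max_eq_right (by linarith : -(c k) ≤ 0)]
    · have : max (-(c k)) 0 = -(c k) := max_eq_left (by linarith)
      rw [this]; ring
  set vn : E := ∑ k, n k • α k with hvn
  set vp : E := ∑ k, p k • α k with hvp
  have hsum : vp = αd j + vn := by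
    rw [hvp, hvn]
    have : αd j = ∑ k, c k • α k := (α.sum_repr (αd j)).symm
    rw [this, ← Finset.sum_add_distrib]
    congr 1; ext k; rw [← add_smul]
  -- ⟪vp, vn⟫ ≤ 0
  have h1 : ⟪vp, vn⟫ ≤ 0 := by
    rw [hvp, hvn, sum_inner]
    apply Finset.sum_nonpos
    intro k _
    rw [real_inner_smul_left, inner_sum]
    simp_rw [real_inner_smul_right]
    rw [Finset.mul_sum]
    apply Finset.sum_nonpos
    intro l _
    rcases eq_or_ne k l with rfl | hkl
    · rcases mul_eq_zero.mp (hpn k) with h | h <;> simp [h]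
    · nlinarith [hobtuse k l hkl, mul_nonneg (hp0 k) (hn0 l)]
  -- ⟪αd j, vn⟫ ≥ 0
  have h2 : 0 ≤ ⟪αd j, vn⟫ := by
    rw [hvn, inner_sum]
    apply Finset.sum_nonneg
    intro l _
    rw [real_inner_smul_right, real_inner_comm, hdual]
    rcases eq_or_ne l j with rfl | h
    · simp [hn0 l]
    · simp [h]
  have hvn0 : vn = 0 := by
    have : ⟪vn, vn⟫ ≤ 0 := by
      have : ⟪vp, vn⟫ = ⟪αd j, vn⟫ + ⟪vn, vn⟫ := by rw [hsum, inner_add_left]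
      linarith
    have := real_inner_self_nonneg (x := vn)
    exact inner_self_eq_zero.mp (le_antisymm ‹⟪vn, vn⟫ ≤ 0› ‹0 ≤ ⟪vn, vn⟫›)
  have hnk : ∀ k, n k = 0 := by
    have hli := α.linearIndependent
    rw [Fintype.linearIndependent_iff] at hli
    exact hli n (by rw [← hvn, hvn0])
  intro k
  have := hnk k
  simp only [hn] at this
  have : -(c k) ≤ 0 := by
    by_contra h
    push_neg at h
    rw [max_eq_left h.le] at this
    linarith
  simpa [hc] using by linarith

end Aux

/-- If `α₁, …, α_d` is a basis of a `d`-dimensional real inner product space with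
`⟪α i, α j⟫ ≤ 0` for all `i ≠ j`, whose "obtuseness graph" (an edge `{i,j}` whenever
`⟪α i, α j⟫ < 0`) is connected, then the dual basis satisfies `⟪αd i, αd j⟫ > 0`
for all `i ≠ j`. -/
theorem dual_basis_pairwise_pos_of_connected
    {E : Type*} [NormedAddCommGroup E] [InnerProductSpace ℝ E]
    {d : ℕ} (hdim : Module.finrank ℝ E = d)
    (α : Module.Basis (Fin d) ℝ E) (αd : Fin d → E)
    (hdual : ∀ i j, ⟪α i, αd j⟫ = if i = j then 1 else 0)
    (hobtuse : ∀ i j, i ≠ j → ⟪α i, α j⟫ ≤ 0)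
    (hconn : (SimpleGraph.fromRel fun i j : Fin d => ⟪α i, α j⟫ < 0).Connected) :
    ∀ i j, i ≠ j → 0 < ⟪αd i, αd j⟫ := by
  intro i j hij
  set G := SimpleGraph.fromRel fun i j : Fin d => ⟪α i, α j⟫ < 0 with hG
  set c : Fin d → ℝ := fun k => α.repr (αd j) k with hc
  have hinner : ∀ k, ⟪αd k, αd j⟫ = c k := fun k =>
    aux_inner_dual_repr α αd hdual (αd j) k
  have hnn : ∀ k, 0 ≤ c k := aux_repr_nonneg α αd hdual hobtuse j
  -- c j > 0
  have hcj : 0 < c j := by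
    rw [← hinner j]
    have hne : αd j ≠ 0 := by
      intro h
      have := hdual j j
      rw [h, inner_zero_right] at this
      simp at this
    have hne' : ⟪αd j, αd j⟫ ≠ 0 := fun h => hne (inner_self_eq_zero.mp h)
    exact lt_of_le_of_ne real_inner_self_nonneg (Ne.symm hne')
  -- expansion of ⟪α i, αd j⟫
  have hexp : ∀ m, ⟪α m, αd j⟫ = ∑ k, c k * ⟪α m, α k⟫ := by
    intro m
    conv_lhs => rw [← α.sum_repr (αd j)]
    rw [inner_sum]
    simp [real_inner_smul_right, mul_comm, hc]
  -- zero coordinate propagates across edges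
  have hzero : ∀ m, m ≠ j → c m = 0 → ∀ l, ⟪α m, α l⟫ < 0 → c l = 0 := by
    intro m hmj hcm l hml
    have hml' : m ≠ l := by
      rintro rfl
      exact absurd hml (not_lt.mpr real_inner_self_nonneg)
    have h0 : ⟪α m, αd j⟫ = 0 := by rw [hdual]; simp [hmj]
    rw [hexp m] at h0
    have hterms : ∀ k ∈ Finset.univ, c k * ⟪α m, α k⟫ ≤ 0 := by
      intro k _
      rcases eq_or_ne m k with rfl | hmk
      · rw [hcm]; simp
      · exact mul_nonpos_of_nonneg_of_nonpos (hnn k) (hobtuse m k hmk)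
    have := (Finset.sum_eq_zero_iff_of_nonpos hterms).mp h0 l (Finset.mem_univ l)
    rcases mul_eq_zero.mp this with h | h
    · exact h
    · exact absurd h (ne_of_lt hml)
  -- positivity propagates across edges
  have step : ∀ u v, G.Adj u v → 0 < c u → 0 < c v := by
    intro u v huv hu
    rcases eq_or_ne v j with rfl | hvj
    · exact hcj
    rcases (hnn v).lt_or_eq with h | h
    · exact h
    · exfalso
      rw [SimpleGraph.fromRel_adj] at huv
      obtain ⟨hne, hor⟩ := huv
      have hvu : ⟪α v, α u⟫ < 0 := by
        rcases hor with h' | h'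
        · rwa [real_inner_comm]
        · exact h'
      have := hzero v hvj h.symm u hvu
      linarith
  have hwalk : ∀ u v, G.Walk u v → 0 < c u → 0 < c v := by
    intro u v w
    induction w with
    | nil => exact id
    | cons h p ih => intro hu; exact ih (step _ _ h hu)
  rw [hinner i]
  obtain ⟨w⟩ := hconn.preconnected j i
  exact hwalk j i w hcj
end

section
/- For every odd integer n ≥ 3, the alternating binomial sum ∑_{i=0}^{n−3} (−1)^i · C(n−3, i) · C(n−1, i+1) equals (−1)^{(n−3)/2} · (n−1) · catalan((n−3)/2), where C(a, b) denotes the binomial coefficient and catalan(m) = (1/(m+1)) · C(2m, m) is the m-th Catalan number. Equivalently, the signature of the (n−3)-dimensional associahedron, σ(𝒜_n) = (1/(n−1)) ∑_{i=0}^{n−3} (−1)^i C(n−3, i) C(n−1, i+1), equals (−1)^{(n−3)/2} times the Catalan number (1/k) C(2k−2, k−1) with k = (n−1)/2. -/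
open Finset Polynomial


-- coefficients of (1 - X^d)^n
lemma coeff_one_sub_X_pow_pow (d n k : ℕ) (hd : 0 < d) :
    (((1 : ℤ[X]) - X ^ d) ^ n).coeff k =
      if d ∣ k then (-1) ^ (k / d) * (n.choose (k / d) : ℤ) else 0 := by
  rw [sub_pow]
  rw [finset_sum_coeff]
  have hterm : ∀ m ∈ Finset.range (n + 1),
      ((-1 : ℤ[X]) ^ (m + n) * 1 ^ m * (X ^ d) ^ (n - m) * (n.choose m : ℤ[X])).coeff k
        = (-1 : ℤ) ^ (m + n) * (n.choose m : ℤ) * (if d * (n - m) = k then 1 else 0) := by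
    intro m hm
    have : ((-1 : ℤ[X]) ^ (m + n) * 1 ^ m * (X ^ d) ^ (n - m) * (n.choose m : ℤ[X]))
        = Polynomial.C ((-1 : ℤ) ^ (m + n) * (n.choose m : ℤ)) * X ^ (d * (n - m)) := by
      rw [show ((n.choose m : ℤ[X])) = Polynomial.C ((n.choose m : ℤ)) by simp,
        show ((-1 : ℤ[X])) = Polynomial.C (-1) by simp]
      simp only [one_pow, ← pow_mul, map_mul, map_pow]
      ring
    rw [this, coeff_C_mul, coeff_X_pow]
    by_cases h : k = d * (n - m) <;> simp [h, eq_comm]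
  rw [Finset.sum_congr rfl hterm]
  by_cases hdk : d ∣ k
  · obtain ⟨j, rfl⟩ := hdk
    rw [if_pos ⟨j, rfl⟩, Nat.mul_div_cancel_left _ hd]
    by_cases hj : j ≤ n
    · rw [Finset.sum_eq_single (n - j)]
      · rw [if_pos (by rw [Nat.sub_sub_self hj]), mul_one,
          Nat.choose_symm hj, show n - j + n = 2 * (n - j) + j by omega,
          pow_add, pow_mul, neg_one_sq, one_pow, one_mul]
      · intro m hm hne
        rw [Finset.mem_range] at hm
        rw [if_neg, mul_zero]
        intro h
        have := Nat.eq_of_mul_eq_mul_left hd h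
        omega
      · intro h
        exact absurd (Finset.mem_range.mpr (by omega)) h
    · rw [Nat.choose_eq_zero_of_lt (by omega), Nat.cast_zero, mul_zero]
      apply Finset.sum_eq_zero
      intro m hm
      rw [Finset.mem_range] at hm
      rw [if_neg, mul_zero]
      have : d * (n - m) ≤ d * n := Nat.mul_le_mul_left d (by omega)
      have : d * n < d * j := by exact (Nat.mul_lt_mul_left hd).mpr (by omega)
      omega
  · rw [if_neg hdk]
    apply Finset.sum_eq_zero
    intro m hm
    rw [if_neg, mul_zero]
    intro h
    exact hdk ⟨n - m, h.symm⟩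

lemma coeff_one_sub_X_pow (a i : ℕ) :
    (((1 : ℤ[X]) - X) ^ a).coeff i = (-1) ^ i * (a.choose i : ℤ) := by
  have := coeff_one_sub_X_pow_pow 1 a i one_pos
  simpa using this

lemma key_sum (m : ℕ) :
    (∑ i ∈ Finset.range (2 * m + 1),
        (-1 : ℤ) ^ i * ((2 * m).choose i : ℤ) * ((2 * m + 2).choose (i + 1) : ℤ))
      = 2 * (-1) ^ m * ((2 * m).choose m : ℤ) := by
  set P : ℤ[X] := ((1 : ℤ[X]) - X ^ 2) ^ (2 * m) with hPdef
  have hP : ∀ k, P.coeff k =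
      if 2 ∣ k then (-1) ^ (k / 2) * ((2 * m).choose (k / 2) : ℤ) else 0 :=
    fun k => coeff_one_sub_X_pow_pow 2 (2 * m) k two_pos
  have hfact : ((1 : ℤ[X]) - X) ^ (2 * m) * (1 + X) ^ (2 * m + 2) = P * (1 + X) ^ 2 := by
    have h1 : ((1 : ℤ[X]) - X) * (1 + X) = 1 - X ^ 2 := by ring
    calc ((1 : ℤ[X]) - X) ^ (2 * m) * (1 + X) ^ (2 * m + 2)
        = (((1 : ℤ[X]) - X) * (1 + X)) ^ (2 * m) * (1 + X) ^ 2 := by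
          rw [mul_pow, pow_add]; ring
      _ = P * (1 + X) ^ 2 := by rw [h1]
  have hL : (((1 : ℤ[X]) - X) ^ (2 * m) * (1 + X) ^ (2 * m + 2)).coeff (2 * m + 1)
      = ∑ i ∈ Finset.range (2 * m + 2),
          (-1 : ℤ) ^ i * ((2 * m).choose i : ℤ) * ((2 * m + 2).choose (2 * m + 1 - i) : ℤ) := by
    rw [coeff_mul, Finset.Nat.sum_antidiagonal_eq_sum_range_succ_mk]
    refine Finset.sum_congr rfl fun i hi => ?_
    rw [coeff_one_sub_X_pow, coeff_one_add_X_pow]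
  have hLS : (∑ i ∈ Finset.range (2 * m + 2),
          (-1 : ℤ) ^ i * ((2 * m).choose i : ℤ) * ((2 * m + 2).choose (2 * m + 1 - i) : ℤ))
      = ∑ i ∈ Finset.range (2 * m + 1),
          (-1 : ℤ) ^ i * ((2 * m).choose i : ℤ) * ((2 * m + 2).choose (i + 1) : ℤ) := by
    rw [Finset.sum_range_succ, Nat.choose_eq_zero_of_lt (by omega), Nat.cast_zero,
      mul_zero, zero_mul, add_zero]
    refine Finset.sum_congr rfl fun i hi => ?_
    rw [Finset.mem_range] at hi
    have : (2 * m + 2).choose (2 * m + 1 - i) = (2 * m + 2).choose (i + 1) := by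
      rw [show 2 * m + 1 - i = 2 * m + 2 - (i + 1) by omega, Nat.choose_symm (by omega)]
    rw [this]
  have hR : (P * (1 + X) ^ 2).coeff (2 * m + 1) = 2 * (-1) ^ m * ((2 * m).choose m : ℤ) := by
    have hexp : P * (1 + X) ^ 2 = P + P * X + P * X + P * X ^ 2 := by ring
    rw [hexp, coeff_add, coeff_add, coeff_add]
    have h0 : P.coeff (2 * m + 1) = 0 := by rw [hP]; rw [if_neg (by omega)]
    have h1 : (P * X).coeff (2 * m + 1) = (-1 : ℤ) ^ m * ((2 * m).choose m : ℤ) := by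
      rw [coeff_mul_X, hP, if_pos (by omega),
        Nat.mul_div_cancel_left _ (by norm_num : 0 < 2)]
    have h2 : (P * X ^ 2).coeff (2 * m + 1) = 0 := by
      rw [coeff_mul_X_pow']
      split
      · rw [hP, if_neg (by omega)]
      · rfl
    rw [h0, h1, h2]
    ring
  have := hL.symm.trans (hfact ▸ hR)
  rw [hLS] at this
  exact this

lemma choose_eq_catalan (m : ℕ) : ((2 * m).choose m) = (m + 1) * catalan m := by
  rw [succ_mul_catalan_eq_centralBinom, Nat.centralBinom_eq_two_mul_choose]


/-- For odd `n ≥ 3`, the alternating binomial sum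
`∑_{i=0}^{n-3} (-1)^i C(n-3, i) C(n-1, i+1)` equals
`(-1)^((n-3)/2) (n-1) catalan((n-3)/2)`.  Equivalently, the signature of the
associahedron, `σ(𝒜_n) = (1/(n-1)) ∑_{i=0}^{n-3} (-1)^i C(n-3, i) C(n-1, i+1)`,
equals `(-1)^((n-3)/2)` times the Catalan number `(1/k) C(2k-2, k-1)` with `k = (n-1)/2`. -/
theorem associahedron_signature_odd (n : ℕ) (hn : 3 ≤ n) (hodd : Odd n) :
    (∑ i ∈ Finset.range (n - 2),
        (-1 : ℤ) ^ i * ((n - 3).choose i : ℤ) * ((n - 1).choose (i + 1) : ℤ)) =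
      (-1 : ℤ) ^ ((n - 3) / 2) * ((n : ℤ) - 1) * (catalan ((n - 3) / 2) : ℤ) ∧
    ((1 : ℚ) / ((n : ℚ) - 1)) *
        (∑ i ∈ Finset.range (n - 2),
          (-1 : ℚ) ^ i * ((n - 3).choose i : ℚ) * ((n - 1).choose (i + 1) : ℚ)) =
      (-1 : ℚ) ^ ((n - 3) / 2) * ((1 : ℚ) / (((n - 1) / 2 : ℕ) : ℚ)) *
        ((2 * ((n - 1) / 2) - 2).choose ((n - 1) / 2 - 1) : ℚ) := by
  obtain ⟨k, hk⟩ := hodd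
  set m := (n - 3) / 2 with hm
  have hn3 : n = 2 * m + 3 := by omega
  have e2 : n - 2 = 2 * m + 1 := by omega
  have e3 : n - 3 = 2 * m := by omega
  have e1 : n - 1 = 2 * m + 2 := by omega
  have e12 : (n - 1) / 2 = m + 1 := by omega
  have ecast : ((n : ℤ)) - 1 = 2 * m + 2 := by rw [hn3]; push_cast; ring
  have hcat : ((2 * m).choose m : ℤ) = (m + 1) * catalan m := by
    rw [choose_eq_catalan]; push_cast; ring
  have hZ : (∑ i ∈ Finset.range (n - 2),
        (-1 : ℤ) ^ i * ((n - 3).choose i : ℤ) * ((n - 1).choose (i + 1) : ℤ)) =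
      (-1 : ℤ) ^ m * ((n : ℤ) - 1) * (catalan m : ℤ) := by
    rw [e2, e3, e1, key_sum m, ecast, hcat]
    ring
  refine ⟨hZ, ?_⟩
  have hQsum : (∑ i ∈ Finset.range (n - 2),
        (-1 : ℚ) ^ i * ((n - 3).choose i : ℚ) * ((n - 1).choose (i + 1) : ℚ)) =
      ((-1 : ℚ) ^ m * ((n : ℚ) - 1) * (catalan m : ℚ)) := by
    have := congrArg (fun z : ℤ => (z : ℚ)) hZ
    push_cast at this
    convert this using 2
  rw [hQsum, e12]
  have hne : ((n : ℚ)) - 1 ≠ 0 := by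
    have h3 : (3 : ℚ) ≤ (n : ℚ) := by exact_mod_cast hn
    intro h; linarith
  have hne2 : ((m : ℚ)) + 1 ≠ 0 := by positivity
  rw [show 2 * (m + 1) - 2 = 2 * m by omega, show m + 1 - 1 = m by omega]
  have hcatQ : ((2 * m).choose m : ℚ) = (m + 1) * catalan m := by
    rw [choose_eq_catalan]; push_cast; ring
  rw [hcatQ]
  field_simp
  push_cast
  ring
end

section
/- For a permutation w of {1, …, n}, let des(w) = #{i : 1 ≤ i ≤ n−1 and w(i) > w(i+1)} be its number of descents. Then, as formal power series over ℚ, one has the exponential generating function identity ∑_{n≥1} (∑_{w ∈ S_n} (−1)^{des(w)}) x^n/n! = tanh(x); equivalently, letting A ∈ ℚ[[x]] be the power series whose n-th coefficient is (∑_{w ∈ S_n} (−1)^{des(w)})/n! for n ≥ 1 and 0 for n = 0, letting C = ∑_{k≥0} x^{2k}/(2k)! and S = ∑_{k≥0} x^{2k+1}/(2k+1)!, one has A · C = S. -/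
open PowerSeries Finset

/-- Number of descents of a list. -/
def desL : List ℕ → ℕ
  | [] => 0
  | [_] => 0
  | a :: b :: t => (if b < a then 1 else 0) + desL (b :: t)

/-- The finset of all arrangements (permutation lists) of a finset. -/
def perms (s : Finset ℕ) : Finset (List ℕ) :=
  (s.sort (· ≤ ·)).permutations.toFinset

/-- Signed descent sum over all arrangements of `s`. -/
def lsum (s : Finset ℕ) : ℚ := ∑ l ∈ perms s, (-1 : ℚ) ^ desL l

lemma mem_perms {l : List ℕ} {s : Finset ℕ} : l ∈ perms s ↔ (l : Multiset ℕ) = s.val := by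
  rw [perms, List.mem_toFinset, List.mem_permutations, ← Multiset.coe_eq_coe, Finset.sort_eq]

lemma nodup_of_mem_perms {l : List ℕ} {s : Finset ℕ} (h : l ∈ perms s) : l.Nodup := by
  have := s.nodup
  rw [← mem_perms.mp h] at this
  exact this

lemma mem_of_mem_perms {l : List ℕ} {s : Finset ℕ} (h : l ∈ perms s) {x : ℕ} (hx : x ∈ l) :
    x ∈ s := by
  rw [← Finset.mem_val, ← mem_perms.mp h]
  exact hx

lemma desL_append_lt (m : ℕ) (l₂ : List ℕ) :
    ∀ l₁ : List ℕ, (∀ x ∈ l₁, x < m) → desL (l₁ ++ m :: l₂) = desL l₁ + desL (m :: l₂)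
  | [], _ => by simp [desL]
  | [a], h => by
    have hma : ¬ m < a := not_lt.mpr (le_of_lt (h a (by simp)))
    show (if m < a then 1 else 0) + desL (m :: l₂) = desL [a] + desL (m :: l₂)
    simp [desL, hma]
  | a :: b :: t, h => by
    have ih := desL_append_lt m l₂ (b :: t) (fun x hx => h x (by simp [hx]))
    show (if b < a then 1 else 0) + desL ((b :: t) ++ m :: l₂)
        = ((if b < a then 1 else 0) + desL (b :: t)) + desL (m :: l₂)
    rw [ih]
    omega

lemma desL_max_cons (m : ℕ) (l₂ : List ℕ) (h : ∀ x ∈ l₂, x < m) :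
    desL (m :: l₂) = desL l₂ + (if l₂ = [] then 0 else 1) := by
  cases l₂ with
  | nil => simp [desL]
  | cons b t =>
    have hb : b < m := h b (by simp)
    show (if b < m then 1 else 0) + desL (b :: t) = desL (b :: t) + ite _ 0 1
    simp [hb, Nat.add_comm]

lemma append_cons_injective {m : ℕ} : ∀ (l₁ l₁' l₂ l₂' : List ℕ), m ∉ l₁ → m ∉ l₁' →
    l₁ ++ m :: l₂ = l₁' ++ m :: l₂' → l₁ = l₁' ∧ l₂ = l₂'
  | [], [], _, _, _, _, h => ⟨rfl, by simpa using h⟩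
  | [], a' :: t', _, _, _, h2, h => by
    simp only [List.nil_append, List.cons_append, List.cons.injEq] at h
    exact absurd (h.1 ▸ (List.mem_cons_self (a := a') (l := t'))) h2
  | a :: t, [], _, _, h1, _, h => by
    simp only [List.nil_append, List.cons_append, List.cons.injEq] at h
    exact absurd (h.1.symm ▸ (List.mem_cons_self (a := a) (l := t))) h1
  | a :: t, a' :: t', l₂, l₂', h1, h2, h => by
    simp only [List.cons_append, List.cons.injEq] at h
    have := append_cons_injective t t' l₂ l₂' (fun hm => h1 (List.mem_cons_of_mem a hm))
      (fun hm => h2 (List.mem_cons_of_mem a' hm)) h.2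
    exact ⟨by rw [h.1, this.1], this.2⟩

lemma lsum_empty : lsum ∅ = 1 := by
  have : perms ∅ = {[]} := by
    ext l
    rw [mem_perms]
    simp [Multiset.coe_eq_zero]
  rw [lsum, this]
  simp [desL]

lemma lsum_split (s : Finset ℕ) (hs : s.Nonempty) :
    lsum s = ∑ A ∈ (s.erase (s.max' hs)).powerset,
      (if A = s.erase (s.max' hs) then (1:ℚ) else -1) *
        (lsum A * lsum ((s.erase (s.max' hs)) \ A)) := by
  set m := s.max' hs with hm
  set E := s.erase m with hE
  have hms : m ∈ s := s.max'_mem hs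
  have hmE : m ∉ E := Finset.notMem_erase m s
  have hsval : s.val = m ::ₘ E.val := by
    rw [hE, Finset.erase_val, (Multiset.cons_erase (Finset.mem_val.mpr hms))]
  have hlt : ∀ x ∈ E, x < m := fun x hx =>
    lt_of_le_of_ne (s.le_max' x (Finset.mem_of_mem_erase hx)) (Finset.ne_of_mem_erase hx)
  have hEAval : ∀ A ∈ E.powerset, A.val + (E \ A).val = E.val := by
    intro A hA
    rw [Finset.sdiff_val, add_tsub_cancel_of_le (Finset.val_le_iff.mpr (Finset.mem_powerset.mp hA))]
  have key : ∑ x ∈ (E.powerset.sigma fun A => perms A ×ˢ perms (E \ A)),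
      ((if x.1 = E then (1:ℚ) else -1) * ((-1:ℚ) ^ desL x.2.1 * (-1:ℚ) ^ desL x.2.2))
      = ∑ l ∈ perms s, (-1 : ℚ) ^ desL l := by
    refine Finset.sum_bij (fun x _ => x.2.1 ++ m :: x.2.2) ?_ ?_ ?_ ?_
    · rintro ⟨A, l₁, l₂⟩ hx
      rw [Finset.mem_sigma, Finset.mem_product] at hx
      obtain ⟨hA, h₁, h₂⟩ := hx
      rw [mem_perms]
      have e1 : ((l₁ ++ m :: l₂ : List ℕ) : Multiset ℕ) = (l₁ : Multiset ℕ) + (m ::ₘ (l₂ : Multiset ℕ)) := by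
        simp
      rw [e1, mem_perms.mp h₁, mem_perms.mp h₂, hsval, Multiset.add_cons, hEAval A hA]
    · rintro ⟨A, l₁, l₂⟩ hx ⟨A', l₁', l₂'⟩ hx' heq
      rw [Finset.mem_sigma, Finset.mem_product] at hx hx'
      obtain ⟨hA, h₁, h₂⟩ := hx
      obtain ⟨hA', h₁', h₂'⟩ := hx'
      have hml₁ : m ∉ l₁ := fun hc => hmE ((Finset.mem_powerset.mp hA) (mem_of_mem_perms h₁ hc))
      have hml₁' : m ∉ l₁' := fun hc => hmE ((Finset.mem_powerset.mp hA') (mem_of_mem_perms h₁' hc))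
      obtain ⟨e1, e2⟩ := append_cons_injective l₁ l₁' l₂ l₂' hml₁ hml₁' heq
      have : A = A' := Finset.val_inj.mp (by rw [← mem_perms.mp h₁, ← mem_perms.mp h₁', e1])
      subst this; subst e1; subst e2; rfl
    · intro l hl
      have hml : m ∈ l := by
        rw [← Multiset.mem_coe, mem_perms.mp hl]; exact Finset.mem_val.mpr hms
      obtain ⟨l₁, l₂, rfl⟩ := List.append_of_mem hml
      have hnd : (l₁ ++ m :: l₂).Nodup := nodup_of_mem_perms hl
      rw [List.nodup_append] at hnd
      obtain ⟨hnd₁, hnd₂, hdisj⟩ := hnd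
      have hml₁ : m ∉ l₁ := fun hc => hdisj m hc m List.mem_cons_self rfl
      have hval : (l₁ : Multiset ℕ) + (m ::ₘ (l₂ : Multiset ℕ)) = m ::ₘ E.val := by
        have := mem_perms.mp hl
        simp only [← Multiset.cons_coe, ← Multiset.coe_add] at this ⊢
        rw [this, hsval]
      rw [Multiset.add_cons] at hval
      have hEval : (l₁ : Multiset ℕ) + (l₂ : Multiset ℕ) = E.val := by
        exact (Multiset.cons_inj_right m).mp hval
      have hAval : (l₁.toFinset : Finset ℕ).val = (l₁ : Multiset ℕ) := by
        simp [List.toFinset, Multiset.toFinset, Multiset.dedup_eq_self.mpr, hnd₁]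
      have hAE : l₁.toFinset ⊆ E := by
        rw [← Finset.val_le_iff, hAval, ← hEval]
        exact le_add_right le_rfl
      refine ⟨⟨l₁.toFinset, l₁, l₂⟩, ?_, rfl⟩
      rw [Finset.mem_sigma, Finset.mem_product]
      refine ⟨Finset.mem_powerset.mpr hAE, mem_perms.mpr hAval.symm, mem_perms.mpr ?_⟩
      rw [Finset.sdiff_val, hAval, ← hEval, add_tsub_cancel_left]
    · rintro ⟨A, l₁, l₂⟩ hx
      rw [Finset.mem_sigma, Finset.mem_product] at hx
      obtain ⟨hA, h₁, h₂⟩ := hx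
      have hAE : A ⊆ E := Finset.mem_powerset.mp hA
      have hl₁lt : ∀ x ∈ l₁, x < m := fun x hx => hlt x (hAE (mem_of_mem_perms h₁ hx))
      have hl₂lt : ∀ x ∈ l₂, x < m := fun x hx =>
        hlt x (Finset.sdiff_subset (mem_of_mem_perms h₂ hx))
      show _ = (-1:ℚ) ^ desL (l₁ ++ m :: l₂)
      rw [desL_append_lt m l₂ l₁ hl₁lt, desL_max_cons m l₂ hl₂lt, pow_add, pow_add]
      by_cases hcase : A = E
      · have : E \ A = ∅ := by rw [hcase, Finset.sdiff_self]
        have hl₂ : l₂ = [] := by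
          have hv := mem_perms.mp h₂
          rw [this] at hv
          exact (Multiset.coe_eq_zero l₂).mp (by simpa using hv)
        rw [if_pos hcase, if_pos hl₂]
        ring
      · have hl₂ne : l₂ ≠ [] := by
          intro hc
          apply hcase
          have h0 : (E \ A).val = 0 := by rw [← mem_perms.mp h₂, hc]; rfl
          have : E \ A = ∅ := Finset.val_eq_zero.mp h0
          exact Finset.Subset.antisymm hAE (Finset.sdiff_eq_empty_iff_subset.mp this)
        rw [if_neg hcase, if_neg hl₂ne]
        ring
  rw [show lsum s = ∑ l ∈ perms s, (-1:ℚ)^desL l from rfl, ← key, Finset.sum_sigma]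
  refine Finset.sum_congr rfl fun A hA => ?_
  rw [lsum, lsum, Finset.sum_product, Finset.sum_mul_sum, Finset.mul_sum]
  refine Finset.sum_congr rfl fun l₁ _ => ?_
  rw [Finset.mul_sum]

lemma powerset_sum_eq (E : Finset ℕ) (n : ℕ) (hE : E.card = n)
    (L : ℕ → ℚ) (hL : ∀ A : Finset ℕ, A ⊆ E → lsum A = L A.card) :
    ∑ A ∈ E.powerset, (if A = E then (1:ℚ) else -1) * (lsum A * lsum (E \ A))
      = ∑ j ∈ range (n+1), (n.choose j : ℚ) *
          ((if j = n then 1 else -1) * (L j * L (n - j))) := by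
  have step1 : ∑ A ∈ E.powerset, (if A = E then (1:ℚ) else -1) * (lsum A * lsum (E \ A))
      = ∑ A ∈ E.powerset, (fun j => (if j = n then (1:ℚ) else -1) * (L j * L (n - j))) A.card := by
    refine Finset.sum_congr rfl fun A hA => ?_
    have hAE : A ⊆ E := Finset.mem_powerset.mp hA
    have h1 : lsum A = L A.card := hL A hAE
    have h2 : lsum (E \ A) = L (n - A.card) := by
      rw [hL (E \ A) Finset.sdiff_subset, Finset.card_sdiff_of_subset hAE, hE]
    have h3 : (A = E) ↔ (A.card = n) := by
      constructor
      · rintro rfl; exact hE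
      · intro hc
        exact Finset.eq_of_subset_of_card_le hAE (by rw [hE, hc])
    simp only [h1, h2]
    by_cases hc : A = E
    · rw [if_pos hc, if_pos (h3.mp hc)]
    · rw [if_neg hc, if_neg (fun hcc => hc (h3.mpr hcc))]
  rw [step1, Finset.sum_powerset_apply_card
    (fun j => (if j = n then (1:ℚ) else -1) * (L j * L (n - j))), hE]
  refine Finset.sum_congr rfl fun j _ => ?_
  rw [nsmul_eq_mul]

lemma lsum_card (n : ℕ) : ∀ s : Finset ℕ, s.card = n → lsum s = lsum (range n) := by
  induction n using Nat.strong_induction_on with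
  | _ n ih =>
    intro s hcard
    cases n with
    | zero => rw [Finset.card_eq_zero.mp hcard, Finset.range_zero]
    | succ n =>
      have hs : s.Nonempty := Finset.card_pos.mp (by omega)
      have hr : (range (n+1)).Nonempty := Finset.nonempty_range_add_one
      have hE1 : (s.erase (s.max' hs)).card = n := by
        rw [Finset.card_erase_of_mem (s.max'_mem hs), hcard]
        omega
      have hE2 : ((range (n+1)).erase ((range (n+1)).max' hr)).card = n := by
        rw [Finset.card_erase_of_mem (Finset.max'_mem _ hr), Finset.card_range]
        omega
      have hLgen : ∀ (E : Finset ℕ), E.card = n → ∀ A : Finset ℕ, A ⊆ E →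
          lsum A = lsum (range A.card) := by
        intro E hEc A hAE
        have : A.card ≤ n := hEc ▸ Finset.card_le_card hAE
        exact ih A.card (by omega) A rfl
      rw [lsum_split s hs, lsum_split _ hr,
        powerset_sum_eq _ n hE1 (fun j => lsum (range j)) (hLgen _ hE1),
        powerset_sum_eq _ n hE2 (fun j => lsum (range j)) (hLgen _ hE2)]

lemma lsum_range_succ (n : ℕ) : lsum (range (n+1)) =
    2 * lsum (range n) -
      ∑ k ∈ range (n+1), (n.choose k : ℚ) * lsum (range k) * lsum (range (n-k)) := by
  have hr : (range (n+1)).Nonempty := Finset.nonempty_range_add_one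
  have hE2 : ((range (n+1)).erase ((range (n+1)).max' hr)).card = n := by
    rw [Finset.card_erase_of_mem (Finset.max'_mem _ hr), Finset.card_range]
    omega
  have hLgen : ∀ A : Finset ℕ, A ⊆ (range (n+1)).erase ((range (n+1)).max' hr) →
      lsum A = lsum (range A.card) := by
    intro A hAE
    exact lsum_card A.card A rfl
  rw [lsum_split _ hr, powerset_sum_eq _ n hE2 (fun j => lsum (range j)) hLgen]
  have split : ∀ j ∈ range (n+1), (n.choose j : ℚ) *
      ((if j = n then 1 else -1) * (lsum (range j) * lsum (range (n - j))))
      = 2 * (if j = n then (n.choose j : ℚ) * (lsum (range j) * lsum (range (n - j))) else 0)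
        - (n.choose j : ℚ) * lsum (range j) * lsum (range (n-j)) := by
    intro j _
    by_cases hc : j = n
    · rw [if_pos hc, if_pos hc]; ring
    · rw [if_neg hc, if_neg hc]; ring
  rw [Finset.sum_congr rfl split, Finset.sum_sub_distrib, ← Finset.mul_sum,
    Finset.sum_ite_eq' (range (n+1)) n]
  rw [if_pos (Finset.self_mem_range_succ n), Nat.choose_self, Nat.sub_self]
  have : lsum (range 0) = 1 := by rw [Finset.range_zero]; exact lsum_empty
  rw [this]
  push_cast
  ring

/-- The number of descents of a permutation `w` of `Fin n` (positions `i` with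
`w i > w (i+1)`). -/
noncomputable def descNum (n : ℕ) (w : Equiv.Perm (Fin n)) : ℕ :=
  Nat.card {i : Fin n // ∃ h : (i : ℕ) + 1 < n, w ⟨(i : ℕ) + 1, h⟩ < w i}

/-- `∑_{w ∈ S_n} (-1)^{des(w)}`, the signature of the type `A_{n-1}` Coxeter zonotope. -/
noncomputable def signedDescentSum (n : ℕ) : ℚ :=
  ∑ w : Equiv.Perm (Fin n), (-1 : ℚ) ^ descNum n w

lemma descNum_eq_sum (n : ℕ) (w : Equiv.Perm (Fin n)) :
    descNum n w = ∑ i : Fin n,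
      if (∃ h : (i : ℕ) + 1 < n, w ⟨(i : ℕ) + 1, h⟩ < w i) then 1 else 0 := by
  classical
  rw [descNum, Nat.card_eq_fintype_card, Fintype.card_subtype, Finset.card_filter]

lemma sum_ite_desL (n : ℕ) (v : Fin n → ℕ) :
    (∑ i : Fin n, if (∃ h : (i : ℕ) + 1 < n, v ⟨(i : ℕ) + 1, h⟩ < v i) then 1 else 0)
      = desL (List.ofFn v) := by
  induction n with
  | zero => simp [desL]
  | succ n ih =>
    rw [Fin.sum_univ_succ, List.ofFn_succ]
    have hsum : (∑ i : Fin n, if (∃ h : ((Fin.succ i : Fin (n+1)) : ℕ) + 1 < n+1,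
          v ⟨((Fin.succ i : Fin (n+1)) : ℕ) + 1, h⟩ < v (Fin.succ i)) then (1:ℕ) else 0)
        = desL (List.ofFn (fun i => v i.succ)) := by
      rw [← ih (fun i => v i.succ)]
      refine Finset.sum_congr rfl fun i _ => ?_
      congr 1
      simp only [eq_iff_iff]
      constructor
      · rintro ⟨h, hp⟩
        have hb : (i : ℕ) + 1 < n := by simpa using h
        refine ⟨hb, ?_⟩
        have he : Fin.succ (⟨(i : ℕ) + 1, hb⟩ : Fin n) =
            (⟨((Fin.succ i : Fin (n+1)) : ℕ) + 1, h⟩ : Fin (n+1)) := by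
          ext; simp
        show v (Fin.succ ⟨(i : ℕ) + 1, hb⟩) < v (Fin.succ i)
        rw [he]; exact hp
      · rintro ⟨h, hp⟩
        have hb : ((Fin.succ i : Fin (n+1)) : ℕ) + 1 < n + 1 := by simp; omega
        refine ⟨hb, ?_⟩
        have he : Fin.succ (⟨(i : ℕ) + 1, h⟩ : Fin n) =
            (⟨((Fin.succ i : Fin (n+1)) : ℕ) + 1, hb⟩ : Fin (n+1)) := by
          ext; simp
        rw [← he]; exact hp
    rw [hsum]
    cases n with
    | zero =>
      have hno : ¬ (∃ h : ((0 : Fin (0+1)) : ℕ) + 1 < 0+1, v ⟨((0 : Fin (0+1)) : ℕ) + 1, h⟩ < v 0) := by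
        rintro ⟨h, -⟩
        simp at h
      rw [if_neg hno]
      simp [desL]
    | succ k =>
      rw [List.ofFn_succ (f := fun i : Fin (k+1) => v i.succ)]
      show (if (∃ h : (0:ℕ) + 1 < k+2, v ⟨1, h⟩ < v 0) then 1 else 0)
          + desL (v (Fin.succ 0) :: List.ofFn fun i : Fin k => v (Fin.succ i.succ))
        = desL (v 0 :: v (Fin.succ 0) :: List.ofFn fun i : Fin k => v (Fin.succ i.succ))
      rw [show desL (v 0 :: v (Fin.succ 0) :: List.ofFn fun i : Fin k => v (Fin.succ i.succ))
          = (if v (Fin.succ 0) < v 0 then 1 else 0)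
            + desL (v (Fin.succ 0) :: List.ofFn fun i : Fin k => v (Fin.succ i.succ)) from rfl]
      have hc : (∃ h : (0:ℕ) + 1 < k+2, v ⟨1, h⟩ < v 0) ↔ v (Fin.succ 0) < v 0 := by
        constructor
        · rintro ⟨h, hp⟩
          have : (Fin.succ (0 : Fin (k+1)) : Fin (k+2)) = ⟨1, h⟩ := by ext; simp
          rw [this]; exact hp
        · intro hp
          refine ⟨by omega, ?_⟩
          have : (⟨1, by omega⟩ : Fin (k+2)) = Fin.succ (0 : Fin (k+1)) := by ext; simp
          rw [this]; exact hp
      rw [if_congr hc rfl rfl]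

lemma sds_eq (n : ℕ) : signedDescentSum n = lsum (range n) := by
  rw [signedDescentSum, lsum]
  refine Finset.sum_bij (fun (w : Equiv.Perm (Fin n)) _ => List.ofFn (fun i => ((w i : ℕ)))) ?_ ?_ ?_ ?_
  · intro w _
    rw [mem_perms]
    have h1 : (List.ofFn (fun i => ((w i : Fin n) : ℕ))).Nodup := by
      rw [List.nodup_ofFn]
      exact fun a b hab => w.injective (Fin.val_injective hab)
    have h2 : (List.ofFn (fun i => ((w i : Fin n) : ℕ))).toFinset = (List.range n).toFinset := by
      ext x
      simp only [List.mem_toFinset, List.mem_ofFn, List.mem_range, Set.mem_range]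
      constructor
      · rintro ⟨i, rfl⟩; exact (w i).isLt
      · intro hx; exact ⟨w.symm ⟨x, hx⟩, by simp⟩
    have h3 : List.Perm (List.ofFn (fun i => ((w i : Fin n) : ℕ))) (List.range n) :=
      List.perm_of_nodup_nodup_toFinset_eq h1 List.nodup_range h2
    have h4 : ((List.ofFn (fun i => ((w i : Fin n) : ℕ))) : Multiset ℕ)
        = ((List.range n) : Multiset ℕ) := Multiset.coe_eq_coe.mpr h3
    rw [h4, Finset.range_val]
    rfl
  · intro w _ w' _ heq
    apply Equiv.ext
    intro i
    have hfun := List.ofFn_inj.mp heq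
    exact Fin.val_injective (congrFun hfun i)
  · intro l hl
    have hval := mem_perms.mp hl
    have hnodup : l.Nodup := nodup_of_mem_perms hl
    have hlen : l.length = n := by
      have := congrArg Multiset.card hval
      simpa using this
    have hmem : ∀ x ∈ l, x < n := fun x hx => Finset.mem_range.mp (mem_of_mem_perms hl hx)
    have hgetlt : ∀ i : Fin n, l.get (Fin.cast hlen.symm i) < n := fun i =>
      hmem _ (List.get_mem l _)
    have hinj : Function.Injective (fun i : Fin n => (⟨l.get (Fin.cast hlen.symm i), hgetlt i⟩ : Fin n)) := by
      intro a b hab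
      have h1 : l.get (Fin.cast hlen.symm a) = l.get (Fin.cast hlen.symm b) :=
        congrArg Fin.val hab
      have h2 := (List.nodup_iff_injective_get.mp hnodup) h1
      have h3 : ((Fin.cast hlen.symm a : Fin l.length) : ℕ) = ((Fin.cast hlen.symm b : Fin l.length) : ℕ) :=
        congrArg Fin.val h2
      exact Fin.val_injective (by simpa using h3)
    refine ⟨Equiv.ofBijective _ ((Finite.injective_iff_bijective).mp hinj), Finset.mem_univ _, ?_⟩
    apply List.ext_get (by simp [hlen])
    intro i hi1 hi2
    rw [List.get_ofFn]
    show l.get (Fin.cast hlen.symm (Fin.cast _ ⟨i, hi1⟩)) = l.get ⟨i, hi2⟩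
    congr 1
  · intro w _
    have hcond : descNum n w = ∑ i : Fin n,
        if (∃ h : (i : ℕ) + 1 < n, ((w ⟨(i : ℕ) + 1, h⟩ : Fin n) : ℕ) < ((w i : Fin n) : ℕ))
          then 1 else 0 := by
      rw [descNum_eq_sum]
      refine Finset.sum_congr rfl fun i _ => rfl
    exact congrArg (fun k => (-1:ℚ)^k) (hcond.trans (sum_ite_desL n (fun i => ((w i : ℕ)))))

lemma sig_zero : signedDescentSum 0 = 1 := by
  rw [sds_eq, Finset.range_zero, lsum_empty]

lemma sig_rec (n : ℕ) : signedDescentSum (n+1) =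
    2 * signedDescentSum n -
      ∑ k ∈ range (n+1), (n.choose k : ℚ) * signedDescentSum k * signedDescentSum (n-k) := by
  simp only [sds_eq]
  exact lsum_range_succ n

noncomputable def Fs : ℚ⟦X⟧ := PowerSeries.mk fun n => signedDescentSum n / n.factorial
noncomputable def Cs : ℚ⟦X⟧ := PowerSeries.mk fun n => if Even n then (1 : ℚ) / n.factorial else 0
noncomputable def Ss : ℚ⟦X⟧ := PowerSeries.mk fun n => if Odd n then (1 : ℚ) / n.factorial else 0

lemma fact_arith (n : ℕ) : (1 : ℚ) / (n+1).factorial * (n+1) = 1 / n.factorial := by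
  have h1 : (n.factorial : ℚ) ≠ 0 := Nat.cast_ne_zero.mpr (Nat.factorial_ne_zero n)
  have h2 : ((n:ℚ) + 1) ≠ 0 := by positivity
  rw [Nat.factorial_succ]
  push_cast
  field_simp

lemma deriv_Cs : d⁄dX ℚ Cs = Ss := by
  ext n
  rw [coeff_derivative]
  simp only [Cs, Ss, coeff_mk, Nat.even_add_one, Nat.not_even_iff_odd]
  by_cases h : Odd n
  · rw [if_pos h, if_pos h, fact_arith]
  · rw [if_neg h, if_neg h, zero_mul]

lemma deriv_Ss : d⁄dX ℚ Ss = Cs := by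
  ext n
  rw [coeff_derivative]
  simp only [Cs, Ss, coeff_mk, Nat.odd_add_one, Nat.not_odd_iff_even]
  by_cases h : Even n
  · rw [if_pos h, if_pos h, fact_arith]
  · rw [if_neg h, if_neg h, zero_mul]

lemma coeff_sq (f : ℚ⟦X⟧) (n : ℕ) :
    (coeff n) (f * f) = ∑ k ∈ range (n+1), coeff k f * coeff (n-k) f := by
  rw [coeff_mul, Finset.Nat.sum_antidiagonal_eq_sum_range_succ_mk]

lemma deriv_Fs : d⁄dX ℚ Fs = 2 * Fs - Fs * Fs := by
  ext n
  rw [coeff_derivative, map_sub, coeff_sq, two_mul, map_add]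
  simp only [Fs, coeff_mk]
  have key := sig_rec n
  have hfact : ((n+1).factorial : ℚ) = (n.factorial : ℚ) * (n+1) := by
    rw [Nat.factorial_succ]; push_cast; ring
  have hn : (n.factorial : ℚ) ≠ 0 := Nat.cast_ne_zero.mpr (Nat.factorial_ne_zero n)
  have hsum : ∑ k ∈ range (n+1), signedDescentSum k / k.factorial *
      (signedDescentSum (n-k) / (n-k).factorial) =
      (∑ k ∈ range (n+1), (n.choose k : ℚ) * signedDescentSum k * signedDescentSum (n-k)) / n.factorial := by
    rw [Finset.sum_div]
    refine Finset.sum_congr rfl fun k hk => ?_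
    have hkn : k ≤ n := Nat.lt_succ_iff.mp (mem_range.mp hk)
    rw [Nat.cast_choose ℚ hkn]
    have h1 : (k.factorial : ℚ) ≠ 0 := Nat.cast_ne_zero.mpr (Nat.factorial_ne_zero k)
    have h2 : ((n-k).factorial : ℚ) ≠ 0 := Nat.cast_ne_zero.mpr (Nat.factorial_ne_zero _)
    field_simp
  rw [hsum, key, hfact]
  field_simp
  ring

lemma ode_zero (g h : ℚ⟦X⟧) (h0 : coeff 0 h = 0) (hd : d⁄dX ℚ h = g * h) : h = 0 := by
  ext n
  rw [map_zero]
  induction n using Nat.strong_induction_on with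
  | _ n ih =>
    cases n with
    | zero => exact h0
    | succ n =>
      have := congrArg (coeff n) hd
      rw [coeff_derivative, coeff_mul] at this
      have hz : ∑ p ∈ Finset.HasAntidiagonal.antidiagonal n, coeff p.1 g * coeff p.2 h = 0 := by
        refine Finset.sum_eq_zero fun p hp => ?_
        have : p.2 ≤ n := by
          have := Finset.HasAntidiagonal.mem_antidiagonal.mp hp
          omega
        rw [ih p.2 (by omega), mul_zero]
      rw [hz] at this
      have hne : ((n : ℚ) + 1) ≠ 0 := by positivity
      exact (mul_eq_zero.mp this).resolve_right hne

/-- The exponential generating function identity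
`∑_{n ≥ 1} (∑_{w ∈ S_n} (-1)^{des w}) xⁿ/n! = tanh x`:
with `A` the EGF of the signed descent sums, `C = ∑ x^{2k}/(2k)!` and
`S = ∑ x^{2k+1}/(2k+1)!`, one has `A * C = S` in `ℚ⟦x⟧`. -/
theorem signed_descent_egf_eq_tanh :
    (PowerSeries.mk fun n => if n = 0 then (0 : ℚ) else signedDescentSum n / n.factorial) *
      (PowerSeries.mk fun n => if Even n then (1 : ℚ) / n.factorial else 0) =
    PowerSeries.mk fun n => if Odd n then (1 : ℚ) / n.factorial else 0 := by
  have hA : (PowerSeries.mk fun n => if n = 0 then (0 : ℚ) else signedDescentSum n / n.factorial)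
      = Fs - 1 := by
    ext n
    rw [map_sub, coeff_mk]
    cases n with
    | zero => simp [Fs, sig_zero]
    | succ n => simp [Fs, coeff_one]
  have hH : Fs * Cs - Cs - Ss = 0 := by
    apply ode_zero (1 - Fs)
    · have c0 : coeff 0 Cs = 1 := by simp [Cs]
      have s0 : coeff 0 Ss = 0 := by simp [Ss]
      have f0 : coeff 0 Fs = 1 := by simp [Fs, sig_zero]
      have hm : coeff 0 (Fs * Cs) = coeff 0 Fs * coeff 0 Cs := by
        simp [PowerSeries.coeff_mul]
      rw [map_sub, map_sub, hm, c0, s0, f0]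
      ring
    · rw [map_sub, map_sub, Derivation.leibniz, deriv_Cs, deriv_Ss, deriv_Fs,
        smul_eq_mul, smul_eq_mul]
      ring
  have : Fs * Cs = Cs + Ss := by linear_combination hH
  rw [hA]
  show (Fs - 1) * Cs = Ss
  rw [sub_mul, one_mul, this]
  ring
end

section
/- Let Δ be a complete simplicial fan in ℝ^d that is locally convex. Then Δ is flag when considered as a simplicial complex: whenever ρ_1, …, ρ_k are rays of Δ such that for every pair i ≠ j the cone of nonnegative combinations of ρ_i ∪ ρ_j is a cone of Δ, the cone of nonnegative combinations of ρ_1 ∪ ⋯ ∪ ρ_k is also a cone of Δ. -/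
open scoped RealInnerProductSpace

/-- The polyhedral cone of all nonnegative linear combinations of a finite set of
vectors in `ℝ^d`. -/
def coneOf {d : ℕ} (s : Finset (EuclideanSpace ℝ (Fin d))) : Set (EuclideanSpace ℝ (Fin d)) :=
  {x | ∃ c : EuclideanSpace ℝ (Fin d) → ℝ, (∀ v, 0 ≤ c v) ∧ x = ∑ v ∈ s, c v • v}

/-- A complete simplicial fan in `ℝ^d`: a finite collection of simplicial cones, recorded
by their (linearly independent) sets of extremal generators, closed under passing to faces
(subsets of the generators), such that the intersection of any two cones is a face of each,
and whose union is all of `ℝ^d`. -/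
structure CompleteSimplicialFan (d : ℕ) where
  cones : Finset (Finset (EuclideanSpace ℝ (Fin d)))
  indep : ∀ s ∈ cones, LinearIndependent ℝ (fun v : s => (v : EuclideanSpace ℝ (Fin d)))
  down_closed : ∀ s ∈ cones, ∀ t ⊆ s, t ∈ cones
  inter_face : ∀ s ∈ cones, ∀ t ∈ cones,
    (∃ u ⊆ s, coneOf u = coneOf s ∩ coneOf t) ∧ (∃ u ⊆ t, coneOf u = coneOf s ∩ coneOf t)
  complete : (⋃ s ∈ cones, coneOf s) = Set.univ

/-- The star of the ray spanned by `v`: the union of all cones of the fan containing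
that ray. -/
def rayStar {d : ℕ} (Δ : CompleteSimplicialFan d) (v : EuclideanSpace ℝ (Fin d)) :
    Set (EuclideanSpace ℝ (Fin d)) :=
  ⋃ s ∈ {s | s ∈ Δ.cones ∧ coneOf {v} ⊆ coneOf s}, coneOf s

/-- A fan is locally convex if the star of each of its rays is a convex set. -/
def LocallyConvexFan {d : ℕ} (Δ : CompleteSimplicialFan d) : Prop :=
  ∀ v : EuclideanSpace ℝ (Fin d), {v} ∈ Δ.cones → Convex ℝ (rayStar Δ v)

noncomputable instance {d : ℕ} : DecidableEq (EuclideanSpace ℝ (Fin d)) :=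
  fun _ _ => Classical.dec _

section FlagAux

variable {d : ℕ}

local notation "E" => EuclideanSpace ℝ (Fin d)

lemma mem_coneOf_of_mem {s : Finset E} {v : E} (h : v ∈ s) : v ∈ coneOf s := by
  refine ⟨fun w => if w = v then 1 else 0, fun w => by dsimp only; split <;> norm_num, ?_⟩
  simp only [ite_smul, one_smul, zero_smul]
  rw [Finset.sum_ite_eq' s v (fun w => w), if_pos h]

lemma zero_mem_coneOf (s : Finset E) : (0 : E) ∈ coneOf s :=
  ⟨fun _ => 0, fun _ => le_refl 0, by simp⟩

lemma smul_mem_coneOf {s : Finset E} {x : E} (hx : x ∈ coneOf s) {a : ℝ} (ha : 0 ≤ a) :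
    a • x ∈ coneOf s := by
  obtain ⟨c, hc, rfl⟩ := hx
  exact ⟨fun v => a * c v, fun v => mul_nonneg ha (hc v),
    by rw [Finset.smul_sum]; exact Finset.sum_congr rfl fun v _ => smul_smul a (c v) v⟩

lemma add_mem_coneOf {s : Finset E} {x y : E} (hx : x ∈ coneOf s) (hy : y ∈ coneOf s) :
    x + y ∈ coneOf s := by
  obtain ⟨c, hc, rfl⟩ := hx
  obtain ⟨c', hc', rfl⟩ := hy
  exact ⟨fun v => c v + c' v, fun v => add_nonneg (hc v) (hc' v),
    by rw [← Finset.sum_add_distrib]; exact Finset.sum_congr rfl fun v _ => (add_smul _ _ _).symm⟩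

lemma sum_mem_coneOf {s : Finset E} {ι : Type*} (t : Finset ι) (f : ι → E)
    (h : ∀ i ∈ t, f i ∈ coneOf s) : (∑ i ∈ t, f i) ∈ coneOf s := by
  classical
  induction t using Finset.induction with
  | empty => simpa using zero_mem_coneOf s
  | insert _ _ hnot ih =>
      rw [Finset.sum_insert hnot]
      exact add_mem_coneOf (h _ (Finset.mem_insert_self _ _))
        (ih fun i hi => h i (Finset.mem_insert_of_mem hi))

lemma coneOf_mono {s t : Finset E} (h : s ⊆ t) : coneOf s ⊆ coneOf t := by
  rintro x ⟨c, hc, rfl⟩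
  exact sum_mem_coneOf s _ fun v hv => smul_mem_coneOf (mem_coneOf_of_mem (h hv)) (hc v)

lemma mem_coneOf_singleton {v x : E} : x ∈ coneOf {v} ↔ ∃ a : ℝ, 0 ≤ a ∧ x = a • v := by
  constructor
  · rintro ⟨c, hc, rfl⟩
    exact ⟨c v, hc v, by simp⟩
  · rintro ⟨a, ha, rfl⟩
    exact ⟨fun _ => a, fun _ => ha, by simp⟩

lemma coneOf_singleton_subset_iff {v : E} {s : Finset E} :
    coneOf {v} ⊆ coneOf s ↔ v ∈ coneOf s := by
  constructor
  · intro h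
    exact h (mem_coneOf_of_mem (Finset.mem_singleton_self v))
  · intro h x hx
    obtain ⟨a, ha, rfl⟩ := mem_coneOf_singleton.mp hx
    exact smul_mem_coneOf h ha

lemma coneOf_empty : coneOf (∅ : Finset E) = {0} := by
  ext x
  constructor
  · rintro ⟨c, hc, rfl⟩; simp
  · rintro rfl; exact zero_mem_coneOf _

lemma coneOf_smul_singleton {v : E} {a : ℝ} (ha : 0 < a) :
    coneOf ({a • v} : Finset E) = coneOf {v} := by
  ext x
  simp only [mem_coneOf_singleton]
  constructor
  · rintro ⟨b, hb, rfl⟩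
    exact ⟨b * a, mul_nonneg hb ha.le, smul_smul b a v⟩
  · rintro ⟨b, hb, rfl⟩
    exact ⟨b / a, div_nonneg hb ha.le, by rw [smul_smul, div_mul_cancel₀ _ ha.ne']⟩

lemma gen_ne_zero {Δ : CompleteSimplicialFan d} {s : Finset E} (hs : s ∈ Δ.cones)
    {v : E} (hv : v ∈ s) : v ≠ 0 := by
  have := Δ.indep s hs
  exact this.ne_zero ⟨v, hv⟩

/-- If the ray of `v` is contained in a cone of the fan, then some generator of that cone
is a positive multiple of `v`. -/
lemma exists_scaled_gen (Δ : CompleteSimplicialFan d) {s : Finset E} (hs : s ∈ Δ.cones)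
    {v : E} (hv : ({v} : Finset E) ∈ Δ.cones) (hsub : coneOf {v} ⊆ coneOf s) :
    ∃ w ∈ s, ∃ a : ℝ, 0 < a ∧ w = a • v ∧ coneOf ({w} : Finset E) = coneOf {v} := by
  obtain ⟨⟨u, husub, hueq⟩, -⟩ := Δ.inter_face s hs {v} hv
  have hvne : v ≠ 0 := gen_ne_zero hv (Finset.mem_singleton_self v)
  have huv : coneOf u = coneOf ({v} : Finset E) := by
    rw [hueq]
    exact Set.inter_eq_self_of_subset_right hsub
  have hvu : v ∈ coneOf u := huv ▸ mem_coneOf_of_mem (Finset.mem_singleton_self v)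
  have hune : u.Nonempty := by
    rcases Finset.eq_empty_or_nonempty u with rfl | h
    · rw [coneOf_empty] at hvu
      exact absurd hvu hvne
    · exact h
  obtain ⟨w, hwu⟩ := hune
  have hws : w ∈ s := husub hwu
  have hwv : w ∈ coneOf ({v} : Finset E) := huv ▸ mem_coneOf_of_mem hwu
  obtain ⟨a, ha, haeq⟩ := mem_coneOf_singleton.mp hwv
  have hane : a ≠ 0 := by
    rintro rfl
    exact gen_ne_zero hs hws (by simpa using haeq)
  have hapos : 0 < a := lt_of_le_of_ne ha (Ne.symm hane)
  exact ⟨w, hws, a, hapos, haeq, by rw [haeq]; exact coneOf_smul_singleton hapos⟩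

/-- A point with strictly positive coefficients on an independent subfamily of `s`,
lying in the cone of a subset `u ⊆ s`, forces those generators into `u`. -/
lemma mem_face_of_pos_coeff {s u : Finset E}
    (hind : LinearIndependent ℝ (fun v : s => (v : E)))
    (husub : u ⊆ s) {n : ℕ} {w : Fin n → E} (hw : ∀ i, w i ∈ s)
    (hwinj : Function.Injective w) {c : Fin n → ℝ} (hc : ∀ i, 0 < c i)
    (hx : (∑ i, c i • w i) ∈ coneOf u) : ∀ i, w i ∈ u := by
  classical
  obtain ⟨cu, hcu, hxeq⟩ := hx
  set b : E → ℝ := fun y => ∑ i ∈ Finset.univ.filter (fun i => w i = y), c i with hb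
  have hsum_b : ∑ y ∈ s, b y • y = ∑ i, c i • w i := by
    rw [← Finset.sum_fiberwise_of_maps_to (fun i _ => hw i) (fun i => c i • w i)]
    refine Finset.sum_congr rfl fun y _ => ?_
    rw [hb]
    simp only []
    rw [Finset.sum_smul]
    refine Finset.sum_congr rfl fun i hi => ?_
    rw [(Finset.mem_filter.mp hi).2]
  have hxu : ∑ y ∈ s, (if y ∈ u then cu y else 0) • y = ∑ i, c i • w i := by
    rw [hxeq]
    rw [← Finset.sum_subset husub (fun y _ hyu => by rw [if_neg hyu, zero_smul])]
    exact Finset.sum_congr rfl fun y hy => by rw [if_pos hy]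
  have h0 : ∑ y : s, ((b (y : E) - if (y : E) ∈ u then cu (y : E) else 0) • (y : E)) = 0 := by
    rw [Finset.sum_coe_sort s (fun y => (b y - if y ∈ u then cu y else 0) • y)]
    have : ∀ y ∈ s, (b y - if y ∈ u then cu y else 0) • y
        = b y • y - (if y ∈ u then cu y else 0) • y := fun y _ => sub_smul _ _ _
    rw [Finset.sum_congr rfl this, Finset.sum_sub_distrib, hsum_b, hxu, sub_self]
  have hcoeff := linearIndependent_iff'.mp hind Finset.univ
    (fun y => b (y : E) - if (y : E) ∈ u then cu (y : E) else 0) h0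
  intro i
  have hfib : Finset.univ.filter (fun j => w j = w i) = {i} := by
    ext j
    simp [hwinj.eq_iff]
  have hbi : b (w i) = c i := by rw [hb]; simp only []; rw [hfib, Finset.sum_singleton]
  have := hcoeff ⟨w i, hw i⟩ (Finset.mem_univ _)
  simp only [hbi] at this
  by_contra hnot
  rw [if_neg hnot, sub_zero] at this
  exact (hc i).ne' this

lemma mem_rayStar_iff {Δ : CompleteSimplicialFan d} {v x : E} :
    x ∈ rayStar Δ v ↔ ∃ s, (s ∈ Δ.cones ∧ coneOf {v} ⊆ coneOf s) ∧ x ∈ coneOf s := by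
  simp [rayStar, Set.mem_iUnion]

lemma smul_mem_rayStar {Δ : CompleteSimplicialFan d} {v x : E} (hx : x ∈ rayStar Δ v)
    {a : ℝ} (ha : 0 ≤ a) : a • x ∈ rayStar Δ v := by
  obtain ⟨s, hs, hxs⟩ := mem_rayStar_iff.mp hx
  exact mem_rayStar_iff.mpr ⟨s, hs, smul_mem_coneOf hxs ha⟩

lemma zero_mem_rayStar {Δ : CompleteSimplicialFan d} {v : E} (hv : ({v} : Finset E) ∈ Δ.cones) :
    (0 : E) ∈ rayStar Δ v :=
  mem_rayStar_iff.mpr ⟨{v}, ⟨hv, le_refl _⟩, zero_mem_coneOf _⟩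

lemma add_mem_rayStar {Δ : CompleteSimplicialFan d} (hlc : LocallyConvexFan Δ) {v : E}
    (hv : ({v} : Finset E) ∈ Δ.cones) {x y : E} (hx : x ∈ rayStar Δ v) (hy : y ∈ rayStar Δ v) :
    x + y ∈ rayStar Δ v := by
  have hmid : (1/2 : ℝ) • x + (1/2 : ℝ) • y ∈ rayStar Δ v :=
    hlc v hv hx hy (by norm_num) (by norm_num) (by norm_num)
  have h2 := smul_mem_rayStar hmid (by norm_num : (0:ℝ) ≤ 2)
  have e1 : (2:ℝ) • ((1/2:ℝ) • x) = x := by rw [smul_smul]; norm_num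
  have e2 : (2:ℝ) • ((1/2:ℝ) • y) = y := by rw [smul_smul]; norm_num
  rwa [smul_add, e1, e2] at h2

lemma sum_mem_rayStar {Δ : CompleteSimplicialFan d} (hlc : LocallyConvexFan Δ) {v : E}
    (hv : ({v} : Finset E) ∈ Δ.cones) {ι : Type*} (t : Finset ι) (f : ι → E)
    (h : ∀ i ∈ t, f i ∈ rayStar Δ v) : (∑ i ∈ t, f i) ∈ rayStar Δ v := by
  classical
  induction t using Finset.induction with
  | empty => simpa using zero_mem_rayStar hv
  | insert _ _ hnot ih =>
      rw [Finset.sum_insert hnot]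
      exact add_mem_rayStar hlc hv (h _ (Finset.mem_insert_self _ _))
        (ih fun i hi => h i (Finset.mem_insert_of_mem hi))

lemma coneOf_image_subset_of_scaled {n : ℕ} {z v : Fin n → E} {mu : Fin n → ℝ}
    (hmu : ∀ i, 0 < mu i) (hzeq : ∀ i, z i = mu i • v i) (hzinj : Function.Injective z) :
    coneOf (Finset.image z Finset.univ) ⊆ coneOf (Finset.image v Finset.univ) := by
  rintro x ⟨c, hc, rfl⟩
  rw [Finset.sum_image (fun a _ b _ h => hzinj h)]
  have : ∀ i ∈ Finset.univ, c (z i) • z i = (c (z i) * mu i) • v i := by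
    intro i _
    rw [hzeq i, smul_smul]
  rw [Finset.sum_congr rfl this]
  exact sum_mem_coneOf _ _ fun i _ => smul_mem_coneOf
    (mem_coneOf_of_mem (Finset.mem_image_of_mem v (Finset.mem_univ i)))
    (mul_nonneg (hc _) (hmu i).le)

lemma coneOf_image_eq_of_scaled {n : ℕ} {z v : Fin n → E} {mu : Fin n → ℝ}
    (hmu : ∀ i, 0 < mu i) (hzeq : ∀ i, z i = mu i • v i) (hzinj : Function.Injective z)
    (hvinj : Function.Injective v) :
    coneOf (Finset.image z Finset.univ) = coneOf (Finset.image v Finset.univ) := by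
  refine le_antisymm (coneOf_image_subset_of_scaled hmu hzeq hzinj) ?_
  refine coneOf_image_subset_of_scaled (z := v) (v := z) (mu := fun i => (mu i)⁻¹)
    (fun i => inv_pos.mpr (hmu i)) (fun i => ?_) hvinj
  rw [hzeq i, smul_smul, inv_mul_cancel₀ (hmu i).ne', one_smul]

lemma flag_aux (Δ : CompleteSimplicialFan d) (hlc : LocallyConvexFan Δ) :
    ∀ (k : ℕ) (v : Fin k → E),
      (∀ i, {v i} ∈ Δ.cones) →
      (∀ i j, i ≠ j → coneOf {v i} ≠ coneOf {v j}) →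
      (∀ i j, i ≠ j → ∃ s ∈ Δ.cones, coneOf s = coneOf {v i, v j}) →
      ∃ s ∈ Δ.cones, coneOf s = coneOf (Finset.image v Finset.univ) := by
  intro k
  induction k with
  | zero =>
      intro v _ _ _
      have h0 : (0 : E) ∈ ⋃ s ∈ Δ.cones, coneOf s := by
        rw [Δ.complete]; trivial
      obtain ⟨s, hs, -⟩ := Set.mem_iUnion₂.mp h0
      refine ⟨∅, Δ.down_closed s hs ∅ (Finset.empty_subset s), ?_⟩
      congr 1
  | succ m ih =>
      intro v hray hdist hpair
      set v' : Fin m → E := fun i => v i.castSucc with hv'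
      have hray' : ∀ i, ({v' i} : Finset E) ∈ Δ.cones := fun i => hray i.castSucc
      have hdist' : ∀ i j, i ≠ j → coneOf {v' i} ≠ coneOf {v' j} := fun i j hij =>
        hdist _ _ (fun h => hij (Fin.castSucc_injective m h))
      have hpair' : ∀ i j, i ≠ j → ∃ s ∈ Δ.cones, coneOf s = coneOf {v' i, v' j} :=
        fun i j hij => hpair _ _ (fun h => hij (Fin.castSucc_injective m h))
      obtain ⟨s, hs, hseq⟩ := ih v' hray' hdist' hpair'
      -- each v' i lies in coneOf s
      have hvs : ∀ i, v' i ∈ coneOf s := by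
        intro i
        rw [hseq]
        exact mem_coneOf_of_mem (Finset.mem_image_of_mem v' (Finset.mem_univ i))
      -- extract scaled generators w i ∈ s
      have hgen : ∀ i : Fin m, ∃ w ∈ s, ∃ a : ℝ, 0 < a ∧ w = a • v' i ∧
          coneOf ({w} : Finset E) = coneOf {v' i} := fun i =>
        exists_scaled_gen Δ hs (hray' i) (coneOf_singleton_subset_iff.mpr (hvs i))
      choose w hws lam hlam hweq hwcone using hgen
      have hwinj : Function.Injective w := by
        intro i j hww
        by_contra hij
        exact hdist' i j hij (by rw [← hwcone i, ← hwcone j, hww])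
      -- the barycentric point
      set x : E := ∑ i, v' i with hx
      have hlast : ∀ i : Fin m, i.castSucc ≠ Fin.last m := fun i => (Fin.castSucc_lt_last i).ne
      have hxstar : x ∈ rayStar Δ (v (Fin.last m)) := by
        refine sum_mem_rayStar hlc (hray (Fin.last m)) _ _ fun i _ => ?_
        obtain ⟨s2, hs2, hs2eq⟩ := hpair i.castSucc (Fin.last m) (hlast i)
        refine mem_rayStar_iff.mpr ⟨s2, ⟨hs2, ?_⟩, ?_⟩
        · rw [hs2eq]
          exact coneOf_mono (by
            intro y hy
            rw [Finset.mem_singleton] at hy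
            subst hy
            exact Finset.mem_insert_of_mem (Finset.mem_singleton_self _))
        · rw [hs2eq]
          exact mem_coneOf_of_mem (Finset.mem_insert_self _ _)
      obtain ⟨g, ⟨hg, hgsub⟩, hxg⟩ := mem_rayStar_iff.mp hxstar
      -- x ∈ coneOf s as well
      have hxs : x ∈ coneOf s := sum_mem_coneOf _ _ fun i _ => hvs i
      obtain ⟨⟨u, husub, hueq⟩, -⟩ := Δ.inter_face s hs g hg
      have hxu : x ∈ coneOf u := by
        rw [hueq]
        exact ⟨hxs, hxg⟩
      -- rewrite x with positive coefficients on the w i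
      have hxw : x = ∑ i, (lam i)⁻¹ • w i := by
        rw [hx]
        refine Finset.sum_congr rfl fun i _ => ?_
        rw [hweq i, smul_smul, inv_mul_cancel₀ (hlam i).ne', one_smul]
      have hwu : ∀ i, w i ∈ u := by
        refine mem_face_of_pos_coeff (Δ.indep s hs) husub hws hwinj
          (fun i => inv_pos.mpr (hlam i)) ?_
        rw [← hxw]
        exact hxu
      -- hence each v' i ∈ coneOf g
      have hvg' : ∀ i : Fin m, v' i ∈ coneOf g := by
        intro i
        have : w i ∈ coneOf g := by
          have := mem_coneOf_of_mem (hwu i)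
          rw [hueq] at this
          exact this.2
        have h2 := smul_mem_coneOf this (inv_nonneg.mpr (hlam i).le)
        rwa [hweq i, smul_smul, inv_mul_cancel₀ (hlam i).ne', one_smul] at h2
      have hvg : ∀ i : Fin (m + 1), v i ∈ coneOf g := by
        intro i
        induction i using Fin.lastCases with
        | last => exact hgsub (mem_coneOf_of_mem (Finset.mem_singleton_self _))
        | cast j => exact hvg' j
      -- extract scaled generators z i ∈ g for all rays
      have hgen2 : ∀ i : Fin (m + 1), ∃ z ∈ g, ∃ a : ℝ, 0 < a ∧ z = a • v i ∧
          coneOf ({z} : Finset E) = coneOf {v i} := fun i =>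
        exists_scaled_gen Δ hg (hray i) (coneOf_singleton_subset_iff.mpr (hvg i))
      choose z hzg mu hmu hzeq hzcone using hgen2
      have hzinj : Function.Injective z := by
        intro i j hzz
        by_contra hij
        exact hdist i j hij (by rw [← hzcone i, ← hzcone j, hzz])
      have hvinj : Function.Injective v := by
        intro i j hvv
        by_contra hij
        exact hdist i j hij (by rw [hvv])
      refine ⟨Finset.image z Finset.univ, ?_, ?_⟩
      · refine Δ.down_closed g hg _ ?_
        intro y hy
        obtain ⟨i, -, rfl⟩ := Finset.mem_image.mp hy
        exact hzg i
      · exact coneOf_image_eq_of_scaled hmu hzeq hzinj hvinj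

end FlagAux

/-- A locally convex complete simplicial fan is flag: if rays `ρ_1, …, ρ_k`
(spanned by `v 1, …, v k`) pairwise span two-dimensional cones of `Δ`, then
their nonnegative span is a cone of `Δ`. -/
theorem locallyConvex_fan_is_flag {d : ℕ} (Δ : CompleteSimplicialFan d)
    (hlc : LocallyConvexFan Δ)
    (k : ℕ) (v : Fin k → EuclideanSpace ℝ (Fin d))
    (hray : ∀ i, {v i} ∈ Δ.cones)
    (hdist : ∀ i j, i ≠ j → coneOf {v i} ≠ coneOf {v j})
    (hpair : ∀ i j, i ≠ j → ∃ s ∈ Δ.cones, coneOf s = coneOf {v i, v j}) :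
    ∃ s ∈ Δ.cones, coneOf s = coneOf (Finset.image v Finset.univ) := by
  exact flag_aux Δ hlc k v hray hdist hpair
end
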